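/- For Chen symbols [s⃗; u⃗] and [t⃗; v⃗] whose bottom-row index sets are disjoint, the evaluation map F sending a Chen symbol to its generalized Chen fraction is multiplicative: F([s⃗;u⃗] ⧢ [t⃗;v⃗]) = F([s⃗;u⃗]) · F([t⃗;v⃗]) as rational functions. -/

import Mathlib

noncomputable section

/-- The space with basis the two-row symbols: lists of columns `(sᵢ, uᵢ)` with `sᵢ ∈ ℤ` and
`uᵢ ∈ ℤ≥1`. -/
abbrev H2 : Type := List (ℤ × ℕ+) →₀ ℚ

/-- The basis two-row symbol. -/
def bs2 (l : List (ℤ × ℕ+)) : H2 := Finsupp.single l 1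

/-- Linear extension of a map defined on two-row basis symbols. -/
def hlift2 (f : List (ℤ × ℕ+) → H2) : H2 →ₗ[ℚ] H2 := Finsupp.lift H2 ℚ (List (ℤ × ℕ+)) f

/-- Prepending a column to every basis symbol. -/
def pre2 (c : ℤ × ℕ+) : H2 →ₗ[ℚ] H2 := hlift2 fun l => bs2 (c :: l)

/-- The operator `I^S` adding 1 to the first top-row entry. -/
def I2 : H2 →ₗ[ℚ] H2 := hlift2 fun l =>
  match l with
  | [] => 0
  | (s, u) :: r => bs2 ((s + 1, u) :: r)

/-- The operator `J^S` subtracting 1 from the first top-row entry, with `J^S(1) = 0`. -/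
def J2 : H2 →ₗ[ℚ] H2 := hlift2 fun l =>
  match l with
  | [] => 0
  | (s, u) :: r => bs2 ((s - 1, u) :: r)

/-- The five-case recursion defining the extended shuffle product on two-row symbols. -/
def IsExtShuffle2 (m : H2 →ₗ[ℚ] H2 →ₗ[ℚ] H2) : Prop :=
  (∀ x, m (bs2 []) x = x) ∧
  (∀ x, m x (bs2 []) = x) ∧
  (∀ (u₁ : ℕ+) (p' : List (ℤ × ℕ+)) (t₁ : ℤ) (v₁ : ℕ+) (q' : List (ℤ × ℕ+)),
    m (bs2 ((0, u₁) :: p')) (bs2 ((t₁, v₁) :: q')) =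
      pre2 (0, u₁) (m (bs2 p') (bs2 ((t₁, v₁) :: q')))) ∧
  (∀ (s₁ : ℤ), 0 < s₁ → ∀ (u₁ v₁ : ℕ+) (p' q' : List (ℤ × ℕ+)),
    m (bs2 ((s₁, u₁) :: p')) (bs2 ((0, v₁) :: q')) =
      pre2 (0, v₁) (m (bs2 ((s₁, u₁) :: p')) (bs2 q'))) ∧
  (∀ (s₁ t₁ : ℤ), 0 < s₁ → 0 < t₁ → ∀ (u₁ v₁ : ℕ+) (p' q' : List (ℤ × ℕ+)),
    m (bs2 ((s₁, u₁) :: p')) (bs2 ((t₁, v₁) :: q')) =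
      I2 (m (bs2 ((s₁, u₁) :: p')) (bs2 ((t₁ - 1, v₁) :: q'))) +
      I2 (m (bs2 ((s₁ - 1, u₁) :: p')) (bs2 ((t₁, v₁) :: q')))) ∧
  (∀ (s₁ t₁ : ℤ), 0 < s₁ → t₁ < 0 → ∀ (u₁ v₁ : ℕ+) (p' q' : List (ℤ × ℕ+)),
    m (bs2 ((s₁, u₁) :: p')) (bs2 ((t₁, v₁) :: q')) =
      J2 (m (bs2 ((s₁, u₁) :: p')) (bs2 ((t₁ + 1, v₁) :: q'))) -
      m (bs2 ((s₁ - 1, u₁) :: p')) (bs2 ((t₁ + 1, v₁) :: q'))) ∧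
  (∀ (s₁ : ℤ), s₁ < 0 → ∀ (t₁ : ℤ) (u₁ v₁ : ℕ+) (p' q' : List (ℤ × ℕ+)),
    m (bs2 ((s₁, u₁) :: p')) (bs2 ((t₁, v₁) :: q')) =
      J2 (m (bs2 ((s₁ + 1, u₁) :: p')) (bs2 ((t₁, v₁) :: q'))) -
      m (bs2 ((s₁ + 1, u₁) :: p')) (bs2 ((t₁ - 1, v₁) :: q')))

/-- The generalized Chen fraction attached to a Chen symbol, as a function of the variables
`x : ℕ+ → ℝ`. -/
def chenFrac2 (x : ℕ+ → ℝ) : List (ℤ × ℕ+) → ℝ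
  | [] => 1
  | (e, i) :: L => ((x i + (L.map fun c => x c.2).sum) ^ e)⁻¹ * chenFrac2 x L

/-- Linear evaluation of elements of `H2` as Chen fractions. -/
def evF (x : ℕ+ → ℝ) : H2 →ₗ[ℚ] ℝ := Finsupp.lift ℝ ℚ (List (ℤ × ℕ+)) (chenFrac2 x)

namespace ChenAux

/-- Sum of variables along the bottom row. -/
def sig (x : ℕ+ → ℝ) (l : List (ℤ × ℕ+)) : ℝ := (l.map fun c => x c.2).sum

@[simp] lemma sig_nil (x : ℕ+ → ℝ) : sig x [] = 0 := rfl

lemma sig_cons (x : ℕ+ → ℝ) (c : ℤ × ℕ+) (l : List (ℤ × ℕ+)) :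
    sig x (c :: l) = x c.2 + sig x l := rfl

lemma chenFrac2_nil (x : ℕ+ → ℝ) : chenFrac2 x [] = 1 := rfl

lemma chenFrac2_cons (x : ℕ+ → ℝ) (e : ℤ) (i : ℕ+) (L : List (ℤ × ℕ+)) :
    chenFrac2 x ((e, i) :: L) = ((x i + sig x L) ^ e)⁻¹ * chenFrac2 x L := rfl

lemma hlift2_bs2 (f : List (ℤ × ℕ+) → H2) (l : List (ℤ × ℕ+)) :
    hlift2 f (bs2 l) = f l := by
  simp [hlift2, bs2]

lemma evF_bs2 (x : ℕ+ → ℝ) (l : List (ℤ × ℕ+)) :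
    evF x (bs2 l) = chenFrac2 x l := by
  simp [evF, bs2]

lemma pre2_bs2 (c : ℤ × ℕ+) (l : List (ℤ × ℕ+)) : pre2 c (bs2 l) = bs2 (c :: l) :=
  hlift2_bs2 _ _

lemma I2_bs2_cons (s : ℤ) (u : ℕ+) (r : List (ℤ × ℕ+)) :
    I2 (bs2 ((s, u) :: r)) = bs2 ((s + 1, u) :: r) := hlift2_bs2 _ _

lemma J2_bs2_cons (s : ℤ) (u : ℕ+) (r : List (ℤ × ℕ+)) :
    J2 (bs2 ((s, u) :: r)) = bs2 ((s - 1, u) :: r) := hlift2_bs2 _ _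

lemma I2_bs2_nil : I2 (bs2 []) = 0 := hlift2_bs2 _ _
lemma J2_bs2_nil : J2 (bs2 []) = 0 := hlift2_bs2 _ _

lemma bs2_mem_supported {t : Set (List (ℤ × ℕ+))} {l : List (ℤ × ℕ+)} (h : l ∈ t) :
    bs2 l ∈ Finsupp.supported ℚ ℚ t := by
  rw [Finsupp.mem_supported]
  intro a ha
  rw [bs2, Finsupp.support_single_ne_zero _ one_ne_zero] at ha
  simp only [Finset.coe_singleton, Set.mem_singleton_iff] at ha
  subst ha; exact h

lemma supported_ind {s : Set (List (ℤ × ℕ+))} {P : H2 → Prop} (h0 : P 0)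
    (hadd : ∀ y z, P y → P z → P (y + z)) (hsmul : ∀ (c : ℚ) z, P z → P (c • z))
    (hb : ∀ l ∈ s, P (bs2 l)) : ∀ z ∈ Finsupp.supported ℚ ℚ s, P z := by
  intro z hz
  rw [Finsupp.supported_eq_span_single] at hz
  induction hz using Submodule.span_induction with
  | mem w hw => obtain ⟨l, hl, rfl⟩ := hw; exact hb l hl
  | zero => exact h0
  | add y z _ _ hy hz => exact hadd y z hy hz
  | smul c z _ hz => exact hsmul c z hz

end ChenAux
namespace ChenAux

/-- Symbols with prescribed bottom-row sum. -/
def Good' (x : ℕ+ → ℝ) (S : ℝ) : Set (List (ℤ × ℕ+)) := {l | sig x l = S}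

/-- Nonempty symbols with prescribed bottom-row sum. -/
def Good (x : ℕ+ → ℝ) (S : ℝ) : Set (List (ℤ × ℕ+)) := {l | l ≠ [] ∧ sig x l = S}

lemma Good_subset (x : ℕ+ → ℝ) (S : ℝ) : Good x S ⊆ Good' x S := fun _ h => h.2

lemma map_supported (f : List (ℤ × ℕ+) → H2) {s t : Set (List (ℤ × ℕ+))}
    (h : ∀ l ∈ s, f l ∈ Finsupp.supported ℚ ℚ t) :
    ∀ z ∈ Finsupp.supported ℚ ℚ s, hlift2 f z ∈ Finsupp.supported ℚ ℚ t := by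
  apply supported_ind
  · simp
  · intro y z hy hz; rw [map_add]; exact Submodule.add_mem _ hy hz
  · intro c z hz; rw [map_smul]; exact Submodule.smul_mem _ _ hz
  · intro l hl; rw [hlift2_bs2]; exact h l hl

lemma evF_hom (x : ℕ+ → ℝ) (φ : H2 →ₗ[ℚ] H2) (c : ℝ) {s : Set (List (ℤ × ℕ+))}
    (h : ∀ l ∈ s, evF x (φ (bs2 l)) = c * evF x (bs2 l)) :
    ∀ z ∈ Finsupp.supported ℚ ℚ s, evF x (φ z) = c * evF x z := by
  apply supported_ind
  · simp
  · intro y z hy hz; rw [map_add, map_add, map_add, hy, hz]; ring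
  · intro d z hz
    rw [map_smul, map_smul, map_smul, hz, Rat.smul_def, Rat.smul_def]; ring
  · exact h

lemma I2_mem (x : ℕ+ → ℝ) (S : ℝ) :
    ∀ z ∈ Finsupp.supported ℚ ℚ (Good x S), I2 z ∈ Finsupp.supported ℚ ℚ (Good x S) := by
  apply map_supported
  rintro l ⟨hne, hsum⟩
  rcases l with _ | ⟨⟨s, u⟩, r⟩
  · exact absurd rfl hne
  · exact bs2_mem_supported ⟨List.cons_ne_nil _ _, by rwa [sig_cons] at hsum ⊢⟩

lemma J2_mem (x : ℕ+ → ℝ) (S : ℝ) :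
    ∀ z ∈ Finsupp.supported ℚ ℚ (Good x S), J2 z ∈ Finsupp.supported ℚ ℚ (Good x S) := by
  apply map_supported
  rintro l ⟨hne, hsum⟩
  rcases l with _ | ⟨⟨s, u⟩, r⟩
  · exact absurd rfl hne
  · exact bs2_mem_supported ⟨List.cons_ne_nil _ _, by rwa [sig_cons] at hsum ⊢⟩

lemma pre2_mem (x : ℕ+ → ℝ) (S : ℝ) (e : ℤ) (u : ℕ+) :
    ∀ z ∈ Finsupp.supported ℚ ℚ (Good' x S),
      pre2 (e, u) z ∈ Finsupp.supported ℚ ℚ (Good x (x u + S)) := by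
  apply map_supported
  intro l hl
  exact bs2_mem_supported ⟨List.cons_ne_nil _ _, by rw [sig_cons, hl]⟩

lemma evF_I2 (x : ℕ+ → ℝ) (S : ℝ) (hS : S ≠ 0) :
    ∀ z ∈ Finsupp.supported ℚ ℚ (Good x S), evF x (I2 z) = S⁻¹ * evF x z := by
  apply evF_hom
  rintro l ⟨hne, hsum⟩
  rcases l with _ | ⟨⟨s, u⟩, r⟩
  · exact absurd rfl hne
  · rw [sig_cons] at hsum
    rw [I2_bs2_cons, evF_bs2, evF_bs2, chenFrac2_cons, chenFrac2_cons, hsum,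
      zpow_add_one₀ hS, mul_inv]
    ring

lemma evF_J2 (x : ℕ+ → ℝ) (S : ℝ) (hS : S ≠ 0) :
    ∀ z ∈ Finsupp.supported ℚ ℚ (Good x S), evF x (J2 z) = S * evF x z := by
  apply evF_hom
  rintro l ⟨hne, hsum⟩
  rcases l with _ | ⟨⟨s, u⟩, r⟩
  · exact absurd rfl hne
  · rw [sig_cons] at hsum
    rw [J2_bs2_cons, evF_bs2, evF_bs2, chenFrac2_cons, chenFrac2_cons, hsum,
      zpow_sub_one₀ hS, mul_inv, inv_inv]
    ring

lemma evF_pre2_zero (x : ℕ+ → ℝ) (u : ℕ+) (z : H2) :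
    evF x (pre2 (0, u) z) = evF x z := by
  induction z using Finsupp.induction_linear with
  | zero => simp
  | add f g hf hg => simp only [map_add, hf, hg]
  | single l c =>
    have : (Finsupp.single l c : H2) = c • bs2 l := by
      rw [bs2, Finsupp.smul_single, smul_eq_mul, mul_one]
    simp only [this, map_smul, pre2_bs2, evF_bs2, chenFrac2_cons, zpow_zero, inv_one, one_mul]

end ChenAux
namespace ChenAux

/-- Absolute value of the first top-row entry. -/
def hAbs : List (ℤ × ℕ+) → ℕ
  | [] => 0
  | c :: _ => c.1.natAbs

theorem key (m2 : H2 →ₗ[ℚ] H2 →ₗ[ℚ] H2) (hm2 : IsExtShuffle2 m2) (x : ℕ+ → ℝ) :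
    ∀ (n k j : ℕ) (p q : List (ℤ × ℕ+)), p.length + q.length = n → hAbs p = k → hAbs q = j →
    (p.map Prod.snd ++ q.map Prod.snd).Nodup →
    (∀ T : Finset ℕ+, T.Nonempty → T ⊆ (p.map Prod.snd ++ q.map Prod.snd).toFinset →
      ∑ i ∈ T, x i ≠ 0) →
    m2 (bs2 p) (bs2 q) ∈ Finsupp.supported ℚ ℚ (Good' x (sig x p + sig x q)) ∧
    ((p ≠ [] ∨ q ≠ []) →
      m2 (bs2 p) (bs2 q) ∈ Finsupp.supported ℚ ℚ (Good x (sig x p + sig x q))) ∧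
    evF x (m2 (bs2 p) (bs2 q)) = chenFrac2 x p * chenFrac2 x q := by
  have H := hm2
  obtain ⟨h1, h2, h3, h4, h5, h6, h7⟩ := H
  intro n
  induction n using Nat.strong_induction_on with
  | _ n IHn =>
  intro k
  induction k using Nat.strong_induction_on with
  | _ k IHk =>
  intro j
  induction j using Nat.strong_induction_on with
  | _ j IHj =>
  intro p q hn hk hj hpq hx
  rcases p with _ | ⟨⟨s₁, u₁⟩, p'⟩
  · refine ⟨?_, ?_, ?_⟩
    · rw [h1]
      exact bs2_mem_supported (show sig x q = sig x [] + sig x q by rw [sig_nil, zero_add])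
    · intro h
      rcases q with _ | ⟨⟨t₁, v₁⟩, q'⟩
      · rcases h with h | h <;> exact absurd rfl h
      · rw [h1]
        exact bs2_mem_supported ⟨List.cons_ne_nil _ _, by rw [sig_nil, zero_add]⟩
    · rw [h1, evF_bs2, chenFrac2_nil, one_mul]
  · rcases q with _ | ⟨⟨t₁, v₁⟩, q'⟩
    · refine ⟨?_, ?_, ?_⟩
      · rw [h2]
        exact bs2_mem_supported
          (show sig x ((s₁, u₁) :: p') = sig x ((s₁, u₁) :: p') + sig x [] by
            rw [sig_nil, add_zero])
      · intro _
        rw [h2]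
        exact bs2_mem_supported ⟨List.cons_ne_nil _ _, by rw [sig_nil, add_zero]⟩
      · rw [h2, evF_bs2, chenFrac2_nil, mul_one]
    · -- both lists nonempty
      have hsum : ∀ L : List ℕ+, L.Nodup → L ≠ [] →
          (∀ i ∈ L, i ∈ List.map Prod.snd ((s₁, u₁) :: p') ++
            List.map Prod.snd ((t₁, v₁) :: q')) → (L.map x).sum ≠ 0 := by
        intro L hnd hne hsub
        rw [← List.sum_toFinset _ hnd]
        apply hx L.toFinset
        · rcases L with _ | ⟨i, L⟩
          · exact absurd rfl hne
          · exact ⟨i, by simp⟩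
        · intro i hi
          rw [List.mem_toFinset] at hi ⊢
          exact hsub i hi
      have hpA : x u₁ + sig x p' = ((List.map Prod.snd ((s₁, u₁) :: p')).map x).sum := by
        rw [List.map_map]; rfl
      have hqB : x v₁ + sig x q' = ((List.map Prod.snd ((t₁, v₁) :: q')).map x).sum := by
        rw [List.map_map]; rfl
      have ha : x u₁ + sig x p' ≠ 0 := by
        rw [hpA]
        exact hsum _ (List.Nodup.of_append_left hpq) (by simp)
          (fun i hi => List.mem_append_left _ hi)
      have hb : x v₁ + sig x q' ≠ 0 := by
        rw [hqB]
        exact hsum _ (List.Nodup.of_append_right hpq) (by simp)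
          (fun i hi => List.mem_append_right _ hi)
      have hS : (x u₁ + sig x p') + (x v₁ + sig x q') ≠ 0 := by
        rw [hpA, hqB, ← List.sum_append, ← List.map_append]
        exact hsum _ hpq (by simp) (fun i hi => hi)
      rcases lt_trichotomy s₁ 0 with hs | hs | hs
      · -- case 7 : s₁ < 0
        have hk' : s₁.natAbs = k := hk
        obtain ⟨_, hM1, hE1⟩ := IHk (s₁ + 1).natAbs (by omega) t₁.natAbs
          ((s₁ + 1, u₁) :: p') ((t₁, v₁) :: q') hn rfl rfl hpq hx
        obtain ⟨_, hM2, hE2⟩ := IHk (s₁ + 1).natAbs (by omega) (t₁ - 1).natAbs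
          ((s₁ + 1, u₁) :: p') ((t₁ - 1, v₁) :: q') hn rfl rfl hpq hx
        have hm1 := hM1 (Or.inl (List.cons_ne_nil _ _))
        have hm2' := hM2 (Or.inl (List.cons_ne_nil _ _))
        have hMem : m2 (bs2 ((s₁, u₁) :: p')) (bs2 ((t₁, v₁) :: q')) ∈
            Finsupp.supported ℚ ℚ (Good x ((x u₁ + sig x p') + (x v₁ + sig x q'))) := by
          rw [h7 s₁ hs t₁ u₁ v₁ p' q']
          exact Submodule.sub_mem _ (J2_mem x _ _ hm1) hm2'
        refine ⟨Finsupp.supported_mono (Good_subset x _) hMem, fun _ => hMem, ?_⟩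
        rw [h7 s₁ hs t₁ u₁ v₁ p' q', map_sub, evF_J2 x _ hS _ hm1, hE1, hE2]
        simp only [chenFrac2_cons]
        set a := x u₁ + sig x p' with hadef
        set b := x v₁ + sig x q' with hbdef
        have e4 : (a ^ (s₁ + 1))⁻¹ = a⁻¹ * (a ^ s₁)⁻¹ := by
          rw [zpow_add_one₀ ha, mul_inv, mul_comm]
        have e1 : (b ^ (t₁ - 1))⁻¹ = b * (b ^ t₁)⁻¹ := by
          rw [zpow_sub_one₀ hb, mul_inv, inv_inv, mul_comm]
        rw [e4, e1]
        have hone : a * a⁻¹ = 1 := mul_inv_cancel₀ ha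
        linear_combination ((a ^ s₁)⁻¹ * (b ^ t₁)⁻¹ * chenFrac2 x p' * chenFrac2 x q') * hone
      · -- case 3 : s₁ = 0
        subst hs
        have hpq' : (p'.map Prod.snd ++ ((t₁, v₁) :: q').map Prod.snd).Nodup := by
          simp only [List.map_cons, List.cons_append, List.nodup_cons] at hpq
          exact hpq.2
        have hx' : ∀ T : Finset ℕ+, T.Nonempty →
            T ⊆ (p'.map Prod.snd ++ ((t₁, v₁) :: q').map Prod.snd).toFinset →
            ∑ i ∈ T, x i ≠ 0 := by
          intro T hT hsub
          apply hx T hT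
          intro i hi
          have hi' := hsub hi
          rw [List.mem_toFinset] at hi' ⊢
          exact List.mem_cons_of_mem _ hi'
        have hn' : p'.length + ((t₁, v₁) :: q').length < n := by
          simp only [List.length_cons] at hn ⊢; omega
        obtain ⟨hM', _, hE⟩ := IHn _ hn' (hAbs p') (hAbs ((t₁, v₁) :: q'))
          p' ((t₁, v₁) :: q') rfl rfl rfl hpq' hx'
        have hMem := pre2_mem x _ 0 u₁ _ hM'
        rw [show x u₁ + (sig x p' + sig x ((t₁, v₁) :: q')) =
          sig x ((0, u₁) :: p') + sig x ((t₁, v₁) :: q') by simp only [sig_cons]; ring] at hMem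
        rw [← h3 u₁ p' t₁ v₁ q'] at hMem
        refine ⟨Finsupp.supported_mono (Good_subset x _) hMem, fun _ => hMem, ?_⟩
        rw [h3 u₁ p' t₁ v₁ q', evF_pre2_zero, hE]
        simp only [chenFrac2_cons, zpow_zero, inv_one, one_mul]
      · rcases lt_trichotomy t₁ 0 with ht | ht | ht
        · -- case 6 : s₁ > 0, t₁ < 0
          have hk' : s₁.natAbs = k := hk
          have hj' : t₁.natAbs = j := hj
          obtain ⟨_, hM1, hE1⟩ := IHj (t₁ + 1).natAbs (by omega)
            ((s₁, u₁) :: p') ((t₁ + 1, v₁) :: q') hn hk rfl hpq hx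
          obtain ⟨_, hM2, hE2⟩ := IHk (s₁ - 1).natAbs (by omega) (t₁ + 1).natAbs
            ((s₁ - 1, u₁) :: p') ((t₁ + 1, v₁) :: q') hn rfl rfl hpq hx
          have hm1 := hM1 (Or.inl (List.cons_ne_nil _ _))
          have hm2' := hM2 (Or.inl (List.cons_ne_nil _ _))
          have hMem : m2 (bs2 ((s₁, u₁) :: p')) (bs2 ((t₁, v₁) :: q')) ∈
              Finsupp.supported ℚ ℚ (Good x ((x u₁ + sig x p') + (x v₁ + sig x q'))) := by
            rw [h6 s₁ t₁ hs ht u₁ v₁ p' q']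
            exact Submodule.sub_mem _ (J2_mem x _ _ hm1) hm2'
          refine ⟨Finsupp.supported_mono (Good_subset x _) hMem, fun _ => hMem, ?_⟩
          rw [h6 s₁ t₁ hs ht u₁ v₁ p' q', map_sub, evF_J2 x _ hS _ hm1, hE1, hE2]
          simp only [chenFrac2_cons]
          set a := x u₁ + sig x p' with hadef
          set b := x v₁ + sig x q' with hbdef
          have e3 : (b ^ (t₁ + 1))⁻¹ = b⁻¹ * (b ^ t₁)⁻¹ := by
            rw [zpow_add_one₀ hb, mul_inv, mul_comm]
          have e2 : (a ^ (s₁ - 1))⁻¹ = a * (a ^ s₁)⁻¹ := by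
            rw [zpow_sub_one₀ ha, mul_inv, inv_inv, mul_comm]
          rw [e3, e2]
          have hone : b * b⁻¹ = 1 := mul_inv_cancel₀ hb
          linear_combination ((a ^ s₁)⁻¹ * (b ^ t₁)⁻¹ * chenFrac2 x p' * chenFrac2 x q') * hone
        · -- case 4 : s₁ > 0, t₁ = 0
          subst ht
          have hsubl : List.Sublist
              (List.map Prod.snd ((s₁, u₁) :: p') ++ List.map Prod.snd q')
              (List.map Prod.snd ((s₁, u₁) :: p') ++ List.map Prod.snd ((0, v₁) :: q')) :=
            List.Sublist.append_left (List.sublist_cons_self _ _) _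
          have hpq' : (List.map Prod.snd ((s₁, u₁) :: p') ++ List.map Prod.snd q').Nodup :=
            List.Nodup.sublist hsubl hpq
          have hx' : ∀ T : Finset ℕ+, T.Nonempty →
              T ⊆ (List.map Prod.snd ((s₁, u₁) :: p') ++ List.map Prod.snd q').toFinset →
              ∑ i ∈ T, x i ≠ 0 := by
            intro T hT hsub
            apply hx T hT
            intro i hi
            have hi' := hsub hi
            rw [List.mem_toFinset] at hi' ⊢
            exact hsubl.mem hi'
          have hn' : ((s₁, u₁) :: p').length + q'.length < n := by
            simp only [List.length_cons] at hn ⊢; omega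
          obtain ⟨hM', _, hE⟩ := IHn _ hn' (hAbs ((s₁, u₁) :: p')) (hAbs q')
            ((s₁, u₁) :: p') q' rfl rfl rfl hpq' hx'
          have hMem := pre2_mem x _ 0 v₁ _ hM'
          rw [show x v₁ + (sig x ((s₁, u₁) :: p') + sig x q') =
            sig x ((s₁, u₁) :: p') + sig x ((0, v₁) :: q') by simp only [sig_cons]; ring]
            at hMem
          rw [← h4 s₁ hs u₁ v₁ p' q'] at hMem
          refine ⟨Finsupp.supported_mono (Good_subset x _) hMem, fun _ => hMem, ?_⟩
          rw [h4 s₁ hs u₁ v₁ p' q', evF_pre2_zero, hE]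
          rw [show chenFrac2 x ((0, v₁) :: q') = chenFrac2 x q' by
            rw [chenFrac2_cons, zpow_zero, inv_one, one_mul]]
        · -- case 5 : s₁ > 0, t₁ > 0
          have hk' : s₁.natAbs = k := hk
          have hj' : t₁.natAbs = j := hj
          obtain ⟨_, hM1, hE1⟩ := IHj (t₁ - 1).natAbs (by omega)
            ((s₁, u₁) :: p') ((t₁ - 1, v₁) :: q') hn hk rfl hpq hx
          obtain ⟨_, hM2, hE2⟩ := IHk (s₁ - 1).natAbs (by omega) t₁.natAbs
            ((s₁ - 1, u₁) :: p') ((t₁, v₁) :: q') hn rfl rfl hpq hx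
          have hm1 := hM1 (Or.inl (List.cons_ne_nil _ _))
          have hm2' := hM2 (Or.inl (List.cons_ne_nil _ _))
          have hMem : m2 (bs2 ((s₁, u₁) :: p')) (bs2 ((t₁, v₁) :: q')) ∈
              Finsupp.supported ℚ ℚ (Good x ((x u₁ + sig x p') + (x v₁ + sig x q'))) := by
            rw [h5 s₁ t₁ hs ht u₁ v₁ p' q']
            exact Submodule.add_mem _ (I2_mem x _ _ hm1) (I2_mem x _ _ hm2')
          refine ⟨Finsupp.supported_mono (Good_subset x _) hMem, fun _ => hMem, ?_⟩
          rw [h5 s₁ t₁ hs ht u₁ v₁ p' q', map_add, evF_I2 x _ hS _ hm1,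
            evF_I2 x _ hS _ hm2', hE1, hE2]
          simp only [chenFrac2_cons]
          set a := x u₁ + sig x p' with hadef
          set b := x v₁ + sig x q' with hbdef
          have e1 : (b ^ (t₁ - 1))⁻¹ = b * (b ^ t₁)⁻¹ := by
            rw [zpow_sub_one₀ hb, mul_inv, inv_inv, mul_comm]
          have e2 : (a ^ (s₁ - 1))⁻¹ = a * (a ^ s₁)⁻¹ := by
            rw [zpow_sub_one₀ ha, mul_inv, inv_inv, mul_comm]
          rw [e1, e2]
          have hone : (a + b) * (a + b)⁻¹ = 1 := mul_inv_cancel₀ hS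
          linear_combination ((a ^ s₁)⁻¹ * (b ^ t₁)⁻¹ * chenFrac2 x p' * chenFrac2 x q') * hone

end ChenAux
/-- For Chen symbols with disjoint bottom-row index sets, evaluation as Chen fractions is
multiplicative with respect to the product of symbols (equality of rational functions, stated
on the domain where no relevant denominator vanishes). -/
theorem chen_symbol_eval_multiplicative (m2 : H2 →ₗ[ℚ] H2 →ₗ[ℚ] H2) (hm2 : IsExtShuffle2 m2)
    (p q : List (ℤ × ℕ+)) (hpq : (p.map Prod.snd ++ q.map Prod.snd).Nodup)
    (x : ℕ+ → ℝ)
    (hx : ∀ T : Finset ℕ+, T.Nonempty → T ⊆ (p.map Prod.snd ++ q.map Prod.snd).toFinset →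
      ∑ i ∈ T, x i ≠ 0) :
    evF x (m2 (bs2 p) (bs2 q)) = chenFrac2 x p * chenFrac2 x q :=
  (ChenAux.key m2 hm2 x (p.length + q.length) (ChenAux.hAbs p) (ChenAux.hAbs q) p q
    rfl rfl rfl hpq hx).2.2
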